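/- Let M be a finitely presented R-module, I an ideal, and α(X), β(X) ∈ End(M[X]) both congruent to an endomorphism of M[X]/IM[X] that they agree on modulo I, with α(0) = β(0). If a ∈ R is non-nilpotent and α(X)_a = β(X)_a in End(M_a[X]), then α(a^N X) = β(a^N X) in End(M[X]) for N sufficiently large. -/

import Mathlib

open TensorProduct Polynomial

section Aux

variable {R : Type*} [CommRing R] {M : Type*} [AddCommGroup M] [Module R M]

noncomputable def polyFinsuppLEquiv (R : Type*) [CommRing R] :
    Polynomial R ≃ₗ[R] (ℕ →₀ R) where
  toFun := fun p => p.toFinsupp.coeff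
  map_add' := fun p q => by rw [Polynomial.toFinsupp_add]; rfl
  map_smul' := fun c p => by rw [Polynomial.toFinsupp_smul]; rfl
  invFun := fun p => Polynomial.ofFinsupp (AddMonoidAlgebra.ofCoeff p)
  left_inv := fun ⟨p⟩ => rfl
  right_inv := fun p => rfl

noncomputable def polyTensorCoeff (R : Type*) [CommRing R] (M : Type*)
    [AddCommGroup M] [Module R M] :
    (Polynomial R ⊗[R] M) ≃ₗ[R] (ℕ →₀ M) :=
  (TensorProduct.congr (polyFinsuppLEquiv R) (LinearEquiv.refl R M)).trans
    (TensorProduct.finsuppScalarLeft R M ℕ)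

lemma polyTensorCoeff_tmul (p : Polynomial R) (m : M) (j : ℕ) :
    polyTensorCoeff R M (p ⊗ₜ[R] m) j = p.coeff j • m := by
  simp [polyTensorCoeff, TensorProduct.finsuppScalarLeft_apply_tmul_apply,
    polyFinsuppLEquiv, Polynomial.coeff]

lemma coeff_aeval_C_mul_X (c : R) (p : Polynomial R) (j : ℕ) :
    ((Polynomial.aeval (Polynomial.C c * Polynomial.X : Polynomial R)) p).coeff j
      = c ^ j * p.coeff j := by
  induction p using Polynomial.induction_on' with
  | add p q hp hq => simp [hp, hq, mul_add]
  | monomial n r =>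
      have he : (Polynomial.aeval (Polynomial.C c * Polynomial.X : Polynomial R))
          ((Polynomial.monomial n) r) = Polynomial.C (r * c ^ n) * Polynomial.X ^ n := by
        rw [Polynomial.aeval_monomial, mul_pow, ← Polynomial.C_pow, Polynomial.algebraMap_eq,
          ← mul_assoc, ← Polynomial.C_mul]
      rw [he]
      simp only [Polynomial.coeff_C_mul, Polynomial.coeff_X_pow, Polynomial.coeff_monomial,
        mul_ite, mul_one, mul_zero]
      by_cases h : j = n
      · subst h; simp [mul_comm]
      · simp [h, Ne.symm h]

lemma polyTensorCoeff_dilation (c : R) (y : Polynomial R ⊗[R] M) (j : ℕ) :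
    polyTensorCoeff R M
      (TensorProduct.map ((Polynomial.aeval (Polynomial.C c * Polynomial.X :
        Polynomial R)).toLinearMap) (LinearMap.id : M →ₗ[R] M) y) j
    = c ^ j • polyTensorCoeff R M y j := by
  induction y with
  | zero => simp
  | tmul p m =>
      simp only [TensorProduct.map_tmul, AlgHom.toLinearMap_apply, LinearMap.id_coe, id_eq,
        polyTensorCoeff_tmul, coeff_aeval_C_mul_X, mul_smul]
  | add x y hx hy =>
      simp only [map_add, Finsupp.add_apply, hx, hy, smul_add]

lemma polyTensorCoeff_zero_eq (y : Polynomial R ⊗[R] M) :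
    polyTensorCoeff R M y 0 = TensorProduct.lid R M
      (TensorProduct.map (Polynomial.lcoeff R 0) (LinearMap.id : M →ₗ[R] M) y) := by
  induction y with
  | zero => simp
  | tmul p m => simp [polyTensorCoeff_tmul]
  | add x y hx hy => simp [map_add, hx, hy]

end Aux

theorem equal_endomorphisms_after_dilation
    {R : Type*} [CommRing R] (I : Ideal R)
    (M : Type*) [AddCommGroup M] [Module R M]
    (hM : Module.FinitePresentation R M)
    (a : R) (ha : ¬ IsNilpotent a)
    (α β : (Polynomial R ⊗[R] M) →ₗ[Polynomial R] (Polynomial R ⊗[R] M))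
    (hαI : ∀ x, α x ∈ (I • ⊤ : Submodule R (Polynomial R ⊗[R] M)))
    (hβI : ∀ x, β x ∈ (I • ⊤ : Submodule R (Polynomial R ⊗[R] M)))
    (h0 : ∀ m : M,
      TensorProduct.map (Polynomial.lcoeff R 0) (LinearMap.id : M →ₗ[R] M)
          (α ((1 : Polynomial R) ⊗ₜ[R] m)) =
        TensorProduct.map (Polynomial.lcoeff R 0) (LinearMap.id : M →ₗ[R] M)
          (β ((1 : Polynomial R) ⊗ₜ[R] m)))
    (hloc : LocalizedModule.map (Submonoid.powers a)
        (LinearMap.restrictScalars R α) =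
      LocalizedModule.map (Submonoid.powers a)
        (LinearMap.restrictScalars R β)) :
    ∃ N₀ : ℕ, ∀ N ≥ N₀, ∀ m : M,
      TensorProduct.map
          ((Polynomial.aeval (Polynomial.C (a ^ N) * Polynomial.X :
            Polynomial R)).toLinearMap) (LinearMap.id : M →ₗ[R] M)
          (α ((1 : Polynomial R) ⊗ₜ[R] m)) =
        TensorProduct.map
          ((Polynomial.aeval (Polynomial.C (a ^ N) * Polynomial.X :
            Polynomial R)).toLinearMap) (LinearMap.id : M →ₗ[R] M)
          (β ((1 : Polynomial R) ⊗ₜ[R] m)) := by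
  classical
  set γ : (Polynomial R ⊗[R] M) →ₗ[R] (Polynomial R ⊗[R] M) :=
    LinearMap.restrictScalars R α - LinearMap.restrictScalars R β with hγ
  -- for each x there is a power of a killing γ x
  have key : ∀ x : Polynomial R ⊗[R] M, ∃ k : ℕ, a ^ k • γ x = 0 := by
    intro x
    have h2 : LocalizedModule.mk ((LinearMap.restrictScalars R α) x)
          (1 : Submonoid.powers a)
        = LocalizedModule.mk ((LinearMap.restrictScalars R β) x) 1 := by
      rw [← LocalizedModule.map_mk (Submonoid.powers a)
          (LinearMap.restrictScalars R α) x 1, hloc, LocalizedModule.map_mk]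
    obtain ⟨u, hu⟩ := LocalizedModule.mk_eq.mp h2
    obtain ⟨k, hk⟩ := u.2
    refine ⟨k, ?_⟩
    rw [hγ, LinearMap.sub_apply, smul_sub, sub_eq_zero]
    have hu' : (u : R) • (LinearMap.restrictScalars R α) x
        = (u : R) • (LinearMap.restrictScalars R β) x := by
      simpa [Submonoid.smul_def] using hu
    rw [show a ^ k = (u : R) from hk]
    exact hu'
  -- uniform power over a finite generating set
  obtain ⟨s, hs, -⟩ := hM
  choose k hk using key
  set K : ℕ := s.sup fun m => k ((1 : Polynomial R) ⊗ₜ[R] m) with hK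
  have hKall : ∀ m : M, a ^ K • γ ((1 : Polynomial R) ⊗ₜ[R] m) = 0 := by
    have hgen : ∀ m ∈ (s : Set M), a ^ K • γ ((1 : Polynomial R) ⊗ₜ[R] m) = 0 := by
      intro m hm
      have hle : k ((1 : Polynomial R) ⊗ₜ[R] m) ≤ K := Finset.le_sup (f := fun m =>
        k ((1 : Polynomial R) ⊗ₜ[R] m)) hm
      obtain ⟨d, hd⟩ := Nat.exists_eq_add_of_le hle
      rw [hd, add_comm, pow_add, mul_smul, hk, smul_zero]
    -- extend to all of M by linearity
    set ψ : M →ₗ[R] Polynomial R ⊗[R] M :=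
      (a ^ K) • (γ ∘ₗ (TensorProduct.mk R (Polynomial R) M 1)) with hψ
    have : ψ = 0 := by
      apply LinearMap.ext_on hs
      intro m hm
      simpa [hψ] using hgen m hm
    intro m
    simpa [hψ] using LinearMap.congr_fun this m
  refine ⟨K, fun N hN m => ?_⟩
  set φ := TensorProduct.map
      ((Polynomial.aeval (Polynomial.C (a ^ N) * Polynomial.X :
        Polynomial R)).toLinearMap) (LinearMap.id : M →ₗ[R] M) with hφ
  have hsub : φ (α ((1 : Polynomial R) ⊗ₜ[R] m)) - φ (β ((1 : Polynomial R) ⊗ₜ[R] m))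
      = φ (γ ((1 : Polynomial R) ⊗ₜ[R] m)) := by
    simp [hγ, map_sub]
  rw [← sub_eq_zero, hsub]
  set y := γ ((1 : Polynomial R) ⊗ₜ[R] m) with hy
  have hy0 : polyTensorCoeff R M y 0 = 0 := by
    rw [polyTensorCoeff_zero_eq]
    simp only [hy, hγ, LinearMap.sub_apply, LinearMap.coe_restrictScalars, map_sub]
    rw [h0 m, sub_self]
  have hyK : ∀ j : ℕ, a ^ K • polyTensorCoeff R M y j = 0 := by
    intro j
    have := hKall m
    rw [← hy] at this
    calc a ^ K • polyTensorCoeff R M y j = polyTensorCoeff R M (a ^ K • y) j := by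
          rw [map_smul]; rfl
      _ = 0 := by rw [this]; simp
  apply (polyTensorCoeff R M).injective
  rw [map_zero]
  ext j
  rw [polyTensorCoeff_dilation]
  rcases Nat.eq_zero_or_pos j with hj | hj
  · subst hj; simpa using hy0
  · have hle : K ≤ N * j := le_trans hN (Nat.le_mul_of_pos_right N hj)
    obtain ⟨d, hd⟩ := Nat.exists_eq_add_of_le hle
    rw [show (a ^ N) ^ j = a ^ (N * j) by rw [pow_mul], hd, add_comm, pow_add, mul_smul, hyK,
      smul_zero]
    rfl
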